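/- Let G be a connected simple graph on n ≥ 2 vertices and let u be a Nash equilibrium strategy profile on G whose image consists of exactly d distinct strategies. Then every used strategy is played by at least 2 vertices, and consequently n ≥ 2d. -/

import Mathlib

open SimpleGraph

/-- Payoff of vertex `v` for strategy `c` under profile `u`: the number of
neighbors of `v` playing strategy `c`. -/
noncomputable def payoff {V C : Type*} (G : SimpleGraph V) (u : V → C) (v : V) (c : C) : ℕ :=
  {x | G.Adj v x ∧ u x = c}.ncard

/-- `u` is a Nash equilibrium of the structured coordination game with
neutral options on `G`. -/
def IsNash {V C : Type*} (G : SimpleGraph V) (u : V → C) : Prop :=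
  ∀ (v : V) (c : C), payoff G u v c ≤ payoff G u v (u v)

theorem cluster_size_two_le {V C : Type*} [Fintype V] (G : SimpleGraph V)
    (hconn : G.Connected) (hV : 2 ≤ Fintype.card V)
    (u : V → C) (hu : IsNash G u) (d : ℕ) (hd : (Set.range u).ncard = d) :
    (∀ c ∈ Set.range u, 2 ≤ {v : V | u v = c}.ncard) ∧ 2 * d ≤ Fintype.card V := by
  classical
  have hfib : ∀ c ∈ Set.range u, 2 ≤ {v : V | u v = c}.ncard := by
    rintro c ⟨v, rfl⟩
    by_contra hlt
    push_neg at hlt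
    -- the fiber contains v and is finite
    have hfin : {w : V | u w = u v}.Finite := Set.toFinite _
    have hv : v ∈ {w : V | u w = u v} := rfl
    have h1 : 1 ≤ {w : V | u w = u v}.ncard :=
      (Set.ncard_pos hfin).mpr ⟨v, hv⟩
    have hcard1 : {w : V | u w = u v}.ncard = 1 := le_antisymm (by omega) h1
    obtain ⟨a, ha⟩ := (Set.ncard_eq_one).mp hcard1
    have hva : a = v := by
      have := ha ▸ hv; simpa using this.symm
    subst hva
    -- a has a neighbor x
    have : ∃ x, G.Adj a x := by
      obtain ⟨w, hw⟩ : ∃ w : V, w ≠ a := by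
        have : 1 < Fintype.card V := by omega
        obtain ⟨w, w', hww⟩ := Fintype.exists_pair_of_one_lt_card this
        rcases eq_or_ne w a with rfl | h
        · exact ⟨w', Ne.symm hww⟩
        · exact ⟨w, h⟩
      obtain ⟨p⟩ := hconn a w
      have hnil : ¬ p.Nil := SimpleGraph.Walk.not_nil_of_ne (Ne.symm hw)
      exact ⟨_, (p.firstDart hnil).adj⟩
    obtain ⟨x, hx⟩ := this
    -- payoff at own strategy is 0
    have hzero : payoff G u a (u a) = 0 := by
      unfold payoff
      have : {y | G.Adj a y ∧ u y = u a} = ∅ := by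
        ext y
        simp only [Set.mem_setOf_eq, Set.mem_empty_iff_false, iff_false, not_and]
        intro hadj hy
        have : y ∈ {w : V | u w = u a} := hy
        rw [ha] at this
        simp only [Set.mem_singleton_iff] at this
        exact G.loopless.irrefl a (this ▸ hadj)
      rw [this, Set.ncard_empty]
    have hone : 1 ≤ payoff G u a (u x) := by
      unfold payoff
      exact (Set.ncard_pos (Set.toFinite _)).mpr ⟨x, hx, rfl⟩
    have := hu a (u x)
    omega
  refine ⟨hfib, ?_⟩
  -- counting
  subst hd
  set s : Finset C := Finset.univ.image u with hs
  have hrange : Set.range u = ↑s := by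
    ext c; simp [hs, Set.mem_range, eq_comm]
  have hds : (Set.range u).ncard = s.card := by
    rw [hrange, Set.ncard_coe_finset]
  rw [hds]
  have hcount : Fintype.card V = ∑ c ∈ s, (Finset.univ.filter fun v => u v = c).card := by
    rw [← Finset.card_univ]
    exact Finset.card_eq_sum_card_fiberwise (fun v _ => by simp [hs])
  rw [hcount]
  calc 2 * s.card = ∑ _c ∈ s, 2 := by rw [Finset.sum_const, smul_eq_mul, mul_comm]
    _ ≤ ∑ c ∈ s, (Finset.univ.filter fun v => u v = c).card := by
        apply Finset.sum_le_sum
        intro c hc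
        have := hfib c (by rw [hrange]; exact_mod_cast hc)
        have heq : {v : V | u v = c}.ncard = (Finset.univ.filter fun v => u v = c).card := by
          rw [← Set.ncard_coe_finset]; congr 1; ext v; simp
        omega
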